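/- arXiv:0806.1179 — 3 statements merged into one kernel-verified Lean document; each statement's English description precedes it below -/
import Mathlib

section
/- The convolution product on the space of finitely supported Q-valued functions on isomorphism classes of labeled rooted forests, defined by (f × g)(F) = Σ_{G ⊆ F} f(G)·g(F/G) where the sum runs over all subforests G of F obtained from admissible cuts and F/G denotes the root component of the cut, is associative. -/
attribute [local instance] Classical.propDecidable

noncomputable section

/-- A labeled rooted forest: a finite set of vertex labels together with a
parent function (`none` = root), acyclic via a depth function. -/
structure Forest where
  verts : Finset ℕ
  parent : ℕ → Option ℕ
  parent_mem : ∀ v ∈ verts, ∀ p, parent v = some p → p ∈ verts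
  wf : ∃ d : ℕ → ℕ, ∀ v ∈ verts, ∀ p, parent v = some p → d p < d v

namespace Forest

/-- `S` is the vertex set of a subforest of `F` (the branches `P_C(F)` severed by an
admissible cut `C`): a subset of the vertices closed under passing to children. -/
def IsSub (F : Forest) (S : Finset ℕ) : Prop :=
  S ⊆ F.verts ∧ ∀ v ∈ S, ∀ w ∈ F.verts, F.parent w = some v → w ∈ S

/-- The subforest `P_C(F)` determined by the (descendant-closed) vertex set `S`. -/
def restrict (F : Forest) (S : Finset ℕ) : Forest where
  verts := S ∩ F.verts
  parent v := (F.parent v).bind fun p =>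
    if v ∈ S ∩ F.verts ∧ p ∈ S ∩ F.verts then some p else none
  parent_mem := by
    intro v hv p hp
    beta_reduce at hp
    cases h : F.parent v with
    | none => rw [h] at hp; simp at hp
    | some q =>
      rw [h] at hp
      simp only [Option.bind_some] at hp
      split at hp
      · rename_i hc; cases hp; exact hc.2
      · simp at hp
  wf := by
    obtain ⟨d, hd⟩ := F.wf
    refine ⟨d, ?_⟩
    intro v hv p hp
    beta_reduce at hp
    cases h : F.parent v with
    | none => rw [h] at hp; simp at hp
    | some q =>
      rw [h] at hp
      simp only [Option.bind_some] at hp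
      split at hp
      · rename_i hc; cases hp
        exact hd v (Finset.mem_inter.mp hv).2 _ h
      · simp at hp

/-- The root part `R_C(F) = F/P_C(F)` determined by the severed vertex set `S`. -/
def quot (F : Forest) (S : Finset ℕ) : Forest where
  verts := F.verts \ S
  parent v := (F.parent v).bind fun p =>
    if v ∈ F.verts \ S ∧ p ∈ F.verts \ S then some p else none
  parent_mem := by
    intro v hv p hp
    beta_reduce at hp
    cases h : F.parent v with
    | none => rw [h] at hp; simp at hp
    | some q =>
      rw [h] at hp
      simp only [Option.bind_some] at hp
      split at hp
      · rename_i hc; cases hp; exact hc.2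
      · simp at hp
  wf := by
    obtain ⟨d, hd⟩ := F.wf
    refine ⟨d, ?_⟩
    intro v hv p hp
    beta_reduce at hp
    cases h : F.parent v with
    | none => rw [h] at hp; simp at hp
    | some q =>
      rw [h] at hp
      simp only [Option.bind_some] at hp
      split at hp
      · rename_i hc; cases hp
        exact hd v (Finset.mem_sdiff.mp hv).1 _ h
      · simp at hp

/-- `φ` realizes an isomorphism of labeled rooted forests (a root- and
incidence-preserving bijection on labels). -/
def IsoMap (F G : Forest) (φ : ℕ → ℕ) : Prop :=
  Set.BijOn φ (F.verts : Set ℕ) (G.verts : Set ℕ) ∧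
    ∀ v ∈ F.verts, (F.parent v).map φ = G.parent (φ v)

/-- Isomorphism of labeled rooted forests. -/
def Iso (F G : Forest) : Prop := ∃ φ, IsoMap F G φ

/-- A function on forests which only depends on the isomorphism class. -/
def Invariant (f : Forest → ℚ) : Prop := ∀ F G, Iso F G → f F = f G

/-- A function on forests supported on finitely many isomorphism classes. -/
def FinSupp (f : Forest → ℚ) : Prop :=
  ∃ s : Finset Forest, ∀ F, f F ≠ 0 → ∃ G ∈ s, Iso F G

/-- The Ringel-Hall convolution product:
`(f × g)(F) = ∑_{G ⊆ F} f(G) · g(F/G)`, the sum running over subforests of `F`. -/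
def conv (f g : Forest → ℚ) : Forest → ℚ := fun F =>
  ∑ S ∈ F.verts.powerset, if F.IsSub S then f (F.restrict S) * g (F.quot S) else 0

end Forest

end


section Helpers

namespace Forest

lemma restrict_verts (F : Forest) (S : Finset ℕ) : (F.restrict S).verts = S ∩ F.verts := rfl

lemma quot_verts (F : Forest) (S : Finset ℕ) : (F.quot S).verts = F.verts \ S := rfl

lemma restrict_parent (F : Forest) (S : Finset ℕ) (v : ℕ) :
    (F.restrict S).parent v = (F.parent v).bind
      (fun p => if v ∈ S ∩ F.verts ∧ p ∈ S ∩ F.verts then some p else none) := rfl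

lemma quot_parent (F : Forest) (S : Finset ℕ) (v : ℕ) :
    (F.quot S).parent v = (F.parent v).bind
      (fun p => if v ∈ F.verts \ S ∧ p ∈ F.verts \ S then some p else none) := rfl

lemma restrict_parent_some_iff (F : Forest) (S : Finset ℕ) (w v : ℕ) :
    (F.restrict S).parent w = some v ↔
      F.parent w = some v ∧ w ∈ S ∩ F.verts ∧ v ∈ S ∩ F.verts := by
  cases hp : F.parent w <;>
    simp only [restrict_parent, hp, Option.bind_none, Option.bind_some]
  · simp
  · split_ifs with hc <;> simp_all <;> rintro rfl <;> tauto

lemma quot_parent_some_iff (F : Forest) (S : Finset ℕ) (w v : ℕ) :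
    (F.quot S).parent w = some v ↔
      F.parent w = some v ∧ w ∈ F.verts \ S ∧ v ∈ F.verts \ S := by
  cases hp : F.parent w <;>
    simp only [quot_parent, hp, Option.bind_none, Option.bind_some]
  · simp
  · split_ifs with hc <;> simp_all <;> rintro rfl <;> tauto

lemma iso_of_eqOn (A B : Forest) (hv : A.verts = B.verts)
    (hp : ∀ v ∈ A.verts, A.parent v = B.parent v) : Forest.Iso A B := by
  refine ⟨id, ?_, ?_⟩
  · have h2 : (A.verts : Set ℕ) = B.verts := by rw [hv]
    exact h2 ▸ Set.bijOn_id _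
  · intro v hv'
    simp [hp v hv']

lemma isSub_restrict_iff (F : Forest) {T : Finset ℕ} (hT : F.IsSub T) (S : Finset ℕ) :
    (F.restrict T).IsSub S ↔ S ⊆ T ∧ F.IsSub S := by
  obtain ⟨hTV, hTc⟩ := hT
  constructor
  · rintro ⟨hSV, hSc⟩
    have hST : S ⊆ T := fun x hx => (Finset.mem_inter.mp (hSV hx)).1
    have hSV' : S ⊆ F.verts := fun x hx => (Finset.mem_inter.mp (hSV hx)).2
    refine ⟨hST, hSV', ?_⟩
    intro v hv w hw hpw
    have hwT : w ∈ T := hTc v (hST hv) w hw hpw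
    refine hSc v hv w ?_ ?_
    · rw [restrict_verts]; exact Finset.mem_inter.mpr ⟨hwT, hw⟩
    · rw [restrict_parent_some_iff]
      exact ⟨hpw, Finset.mem_inter.mpr ⟨hwT, hw⟩, Finset.mem_inter.mpr ⟨hST hv, hSV' hv⟩⟩
  · rintro ⟨hST, hSV, hSc⟩
    refine ⟨fun x hx => Finset.mem_inter.mpr ⟨hST hx, hSV hx⟩, ?_⟩
    intro v hv w hw hpw
    rw [restrict_parent_some_iff] at hpw
    exact hSc v hv w (Finset.mem_inter.mp hpw.2.1).2 hpw.1

lemma isSub_quot_iff (F : Forest) {S : Finset ℕ} (hS : F.IsSub S) (U : Finset ℕ) :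
    (F.quot S).IsSub U ↔ U ⊆ F.verts \ S ∧ F.IsSub (U ∪ S) := by
  obtain ⟨hSV, hSc⟩ := hS
  constructor
  · rintro ⟨hUV, hUc⟩
    rw [quot_verts] at hUV
    refine ⟨hUV, ?_, ?_⟩
    · intro x hx
      rcases Finset.mem_union.mp hx with hx | hx
      · exact (Finset.mem_sdiff.mp (hUV hx)).1
      · exact hSV hx
    · intro v hv w hw hpw
      rcases Finset.mem_union.mp hv with hv | hv
      · by_cases hwS : w ∈ S
        · exact Finset.mem_union.mpr (Or.inr hwS)
        · refine Finset.mem_union.mpr (Or.inl (hUc v hv w ?_ ?_))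
          · rw [quot_verts]; exact Finset.mem_sdiff.mpr ⟨hw, hwS⟩
          · rw [quot_parent_some_iff]
            exact ⟨hpw, Finset.mem_sdiff.mpr ⟨hw, hwS⟩, hUV hv⟩
      · exact Finset.mem_union.mpr (Or.inr (hSc v hv w hw hpw))
  · rintro ⟨hUV, hUSV, hUSc⟩
    refine ⟨by rw [quot_verts]; exact hUV, ?_⟩
    intro v hv w hw hpw
    rw [quot_verts] at hw
    rw [quot_parent_some_iff] at hpw
    have hwUS := hUSc v (Finset.mem_union.mpr (Or.inl hv)) w (Finset.mem_sdiff.mp hw).1 hpw.1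
    rcases Finset.mem_union.mp hwUS with h1 | h1
    · exact h1
    · exact absurd h1 (Finset.mem_sdiff.mp hw).2

lemma iso_restrict_restrict (F : Forest) {S T : Finset ℕ} (hST : S ⊆ T)
    (hTV : T ⊆ F.verts) :
    Forest.Iso ((F.restrict T).restrict S) (F.restrict S) := by
  have hST' : ∀ x, x ∈ S → x ∈ T := fun x => @hST x
  have hTV' : ∀ x, x ∈ T → x ∈ F.verts := fun x => @hTV x
  apply iso_of_eqOn
  · ext x
    simp only [restrict_verts, Finset.mem_inter]
    have := hST' x; have := hTV' x; tauto
  · intro v _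
    have hSv := hST' v; have hTv := hTV' v
    simp only [restrict_parent, quot_parent, restrict_verts, quot_verts,
      Finset.mem_inter, Finset.mem_sdiff]
    cases hp : F.parent v with
    | none => simp
    | some p =>
      have hSp := hST' p; have hTp := hTV' p
      simp only [Option.bind_some]
      split_ifs
      all_goals simp only [Option.bind_some, Option.bind_none]
      all_goals try split_ifs
      all_goals first | rfl | (exfalso; tauto)

set_option maxHeartbeats 1600000 in
lemma iso_restrict_quot (F : Forest) {S T : Finset ℕ} (hST : S ⊆ T)
    (hTV : T ⊆ F.verts) :
    Forest.Iso ((F.restrict T).quot S) ((F.quot S).restrict (T \ S)) := by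
  have hST' : ∀ x, x ∈ S → x ∈ T := fun x => @hST x
  have hTV' : ∀ x, x ∈ T → x ∈ F.verts := fun x => @hTV x
  apply iso_of_eqOn
  · ext x
    simp only [restrict_verts, quot_verts, Finset.mem_inter, Finset.mem_sdiff]
    have := hST' x; have := hTV' x; tauto
  · intro v _
    have hSv := hST' v; have hTv := hTV' v
    simp only [restrict_parent, quot_parent, restrict_verts, quot_verts,
      Finset.mem_inter, Finset.mem_sdiff]
    cases hp : F.parent v with
    | none => simp
    | some p =>
      have hSp := hST' p; have hTp := hTV' p
      simp only [Option.bind_some]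
      split_ifs
      all_goals simp only [Option.bind_some, Option.bind_none]
      all_goals try split_ifs
      all_goals first | rfl | (exfalso; tauto)

set_option maxHeartbeats 1600000 in
lemma iso_quot_quot (F : Forest) {S T : Finset ℕ} (hST : S ⊆ T)
    (hTV : T ⊆ F.verts) :
    Forest.Iso (F.quot T) ((F.quot S).quot (T \ S)) := by
  have hST' : ∀ x, x ∈ S → x ∈ T := fun x => @hST x
  have hTV' : ∀ x, x ∈ T → x ∈ F.verts := fun x => @hTV x
  apply iso_of_eqOn
  · ext x
    simp only [quot_verts, Finset.mem_sdiff]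
    have := hST' x; have := hTV' x; tauto
  · intro v _
    have hSv := hST' v; have hTv := hTV' v
    simp only [restrict_parent, quot_parent, restrict_verts, quot_verts,
      Finset.mem_inter, Finset.mem_sdiff]
    cases hp : F.parent v with
    | none => simp
    | some p =>
      have hSp := hST' p; have hTp := hTV' p
      simp only [Option.bind_some]
      split_ifs
      all_goals simp only [Option.bind_some, Option.bind_none]
      all_goals try split_ifs
      all_goals first | rfl | (exfalso; tauto)

end Forest

end Helpers

noncomputable def Akey (f g h : Forest → ℚ) (F : Forest) (S T : Finset ℕ) : ℚ :=
  if S ⊆ T ∧ F.IsSub S ∧ F.IsSub T then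
    f (F.restrict S) * (g ((F.quot S).restrict (T \ S)) * h (F.quot T)) else 0

lemma hall_lhs (f g h : Forest → ℚ)
    (hf : Forest.Invariant f) (hg : Forest.Invariant g) (F : Forest) :
    Forest.conv (Forest.conv f g) h F
      = ∑ T ∈ F.verts.powerset, ∑ S ∈ F.verts.powerset, Akey f g h F S T := by
  simp only [Forest.conv]
  apply Finset.sum_congr rfl
  intro T hT
  have hTV : T ⊆ F.verts := Finset.mem_powerset.mp hT
  by_cases hTsub : F.IsSub T
  · rw [if_pos hTsub, Finset.sum_mul]
    have hverts : (F.restrict T).verts = T := by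
      rw [Forest.restrict_verts]; exact Finset.inter_eq_left.mpr hTV
    rw [hverts]
    have hstep : ∀ S ∈ T.powerset,
        (if (F.restrict T).IsSub S
            then f ((F.restrict T).restrict S) * g ((F.restrict T).quot S) else 0)
          * h (F.quot T) = Akey f g h F S T := by
      intro S hS
      by_cases hSsub : (F.restrict T).IsSub S
      · obtain ⟨hST, hSsubF⟩ := (Forest.isSub_restrict_iff F hTsub S).mp hSsub
        rw [if_pos hSsub, Akey, if_pos ⟨hST, hSsubF, hTsub⟩,
          hf _ _ (Forest.iso_restrict_restrict F hST hTV),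
          hg _ _ (Forest.iso_restrict_quot F hST hTV)]
        ring
      · rw [if_neg hSsub, zero_mul, Akey, if_neg]
        intro hc
        exact hSsub ((Forest.isSub_restrict_iff F hTsub S).mpr ⟨hc.1, hc.2.1⟩)
    rw [Finset.sum_congr rfl hstep]
    apply Finset.sum_subset (Finset.powerset_mono.mpr hTV)
    intro S hS hSnot
    rw [Akey, if_neg]
    intro hc
    exact hSnot (Finset.mem_powerset.mpr hc.1)
  · rw [if_neg hTsub]
    symm
    apply Finset.sum_eq_zero
    intro S _
    rw [Akey, if_neg]
    intro hc
    exact hTsub hc.2.2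

lemma hall_rhs (f g h : Forest → ℚ)
    (hg : Forest.Invariant g) (hh : Forest.Invariant h) (F : Forest) :
    Forest.conv f (Forest.conv g h) F
      = ∑ S ∈ F.verts.powerset, ∑ T ∈ F.verts.powerset, Akey f g h F S T := by
  simp only [Forest.conv]
  apply Finset.sum_congr rfl
  intro S hS
  have hSV : S ⊆ F.verts := Finset.mem_powerset.mp hS
  by_cases hSsub : F.IsSub S
  · rw [if_pos hSsub, Finset.mul_sum]
    have hverts : (F.quot S).verts = F.verts \ S := Forest.quot_verts F S
    rw [hverts]
    -- rewrite the big sum as a sum over the image of (· ∪ S)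
    have hsub : ((F.verts \ S).powerset.image (· ∪ S)) ⊆ F.verts.powerset := by
      intro T hT
      obtain ⟨U, hU, rfl⟩ := Finset.mem_image.mp hT
      have hUV := Finset.mem_powerset.mp hU
      refine Finset.mem_powerset.mpr (Finset.union_subset ?_ hSV)
      exact fun x hx => (Finset.mem_sdiff.mp (hUV hx)).1
    have hzero : ∀ T ∈ F.verts.powerset,
        T ∉ (F.verts \ S).powerset.image (· ∪ S) → Akey f g h F S T = 0 := by
      intro T hT hTnot
      rw [Akey, if_neg]
      rintro ⟨hST, _, hTsub, _⟩
      apply hTnot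
      refine Finset.mem_image.mpr ⟨T \ S, ?_, Finset.sdiff_union_of_subset hST⟩
      refine Finset.mem_powerset.mpr ?_
      intro x hx
      have hx' := Finset.mem_sdiff.mp hx
      exact Finset.mem_sdiff.mpr ⟨hTsub hx'.1, hx'.2⟩
    have hinj : ∀ U1 ∈ (F.verts \ S).powerset, ∀ U2 ∈ (F.verts \ S).powerset,
        U1 ∪ S = U2 ∪ S → U1 = U2 := by
      intro U1 hU1 U2 hU2 heq
      have d1 : ∀ x ∈ U1, x ∉ S := fun x hx =>
        (Finset.mem_sdiff.mp (Finset.mem_powerset.mp hU1 hx)).2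
      have d2 : ∀ x ∈ U2, x ∉ S := fun x hx =>
        (Finset.mem_sdiff.mp (Finset.mem_powerset.mp hU2 hx)).2
      ext x
      constructor
      · intro hx
        have : x ∈ U2 ∪ S := heq ▸ Finset.mem_union.mpr (Or.inl hx)
        rcases Finset.mem_union.mp this with h1 | h1
        · exact h1
        · exact absurd h1 (d1 x hx)
      · intro hx
        have : x ∈ U1 ∪ S := heq ▸ Finset.mem_union.mpr (Or.inl hx)
        rcases Finset.mem_union.mp this with h1 | h1
        · exact h1
        · exact absurd h1 (d2 x hx)
    rw [show (∑ T ∈ F.verts.powerset, Akey f g h F S T)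
        = ∑ T ∈ (F.verts \ S).powerset.image (· ∪ S), Akey f g h F S T from
      (Finset.sum_subset hsub hzero).symm]
    rw [Finset.sum_image hinj]
    apply Finset.sum_congr rfl
    intro U hU
    have hUVS : U ⊆ F.verts \ S := Finset.mem_powerset.mp hU
    have hdisj : ∀ x ∈ U, x ∉ S := fun x hx => (Finset.mem_sdiff.mp (hUVS hx)).2
    have hUS : (U ∪ S) \ S = U := by
      ext x
      simp only [Finset.mem_sdiff, Finset.mem_union]
      constructor
      · rintro ⟨h1 | h1, h2⟩
        · exact h1
        · exact absurd h1 h2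
      · intro hx
        exact ⟨Or.inl hx, hdisj x hx⟩
    have hUSV : U ∪ S ⊆ F.verts := by
      refine Finset.union_subset ?_ hSV
      exact fun x hx => (Finset.mem_sdiff.mp (hUVS hx)).1
    have hSsubUS : S ⊆ U ∪ S := Finset.subset_union_right
    by_cases hUsub : (F.quot S).IsSub U
    · have hUSsub : F.IsSub (U ∪ S) :=
        ((Forest.isSub_quot_iff F hSsub U).mp hUsub).2
      rw [if_pos hUsub, Akey, if_pos ⟨hSsubUS, hSsub, hUSsub⟩, hUS]
      have hiso : (F.quot (U ∪ S)).Iso ((F.quot S).quot U) := by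
        have := Forest.iso_quot_quot F hSsubUS hUSV
        rwa [hUS] at this
      rw [hh _ _ hiso]
    · rw [if_neg hUsub, mul_zero, Akey, if_neg]
      rintro ⟨_, _, hUSsub⟩
      exact hUsub ((Forest.isSub_quot_iff F hSsub U).mpr ⟨hUVS, hUSsub⟩)
  · rw [if_neg hSsub]
    symm
    apply Finset.sum_eq_zero
    intro T _
    rw [Akey, if_neg]
    intro hc
    exact hSsub hc.2.1

/-- The convolution product on the space of finitely supported
`ℚ`-valued isomorphism-invariant functions on labeled rooted forests,
`(f × g)(F) = ∑_{G ⊆ F} f(G)·g(F/G)`, is associative. -/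
theorem hall_conv_assoc (f g h : Forest → ℚ)
    (hf : Forest.Invariant f) (hf' : Forest.FinSupp f)
    (hg : Forest.Invariant g) (hg' : Forest.FinSupp g)
    (hh : Forest.Invariant h) (hh' : Forest.FinSupp h) :
    Forest.conv (Forest.conv f g) h = Forest.conv f (Forest.conv g h) := by
  funext F
  rw [hall_lhs f g h hf hg F, hall_rhs f g h hg hh F, Finset.sum_comm]
end

section
/- For a labeled rooted forest F with admissible cut C, there is a bijection between admissible cuts C' of F satisfying C ≤ C' (i.e., every edge of C' lies weakly closer to the root than the edges of C along any leaf-to-root path) and admissible cuts of the quotient forest R_C(F); consequently subforests of R_C(F) correspond bijectively to subforests H of F with P_C(F) ⊆ H ⊆ F. -/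
attribute [local instance] Classical.propDecidable

namespace Forest

/-- `Reaches F u v`: `v` lies (weakly) on the path from `u` to the root. -/
def Reaches (F : Forest) (u v : ℕ) : Prop :=
  Relation.ReflTransGen (fun a b => F.parent a = some b) u v

/-- An admissible cut, encoded by the set of lower endpoints of the cut edges:
a set of non-root vertices, no two of which lie on a common leaf-to-root path. -/
def AdmissibleCut (F : Forest) (C : Finset ℕ) : Prop :=
  (∀ v ∈ C, v ∈ F.verts ∧ F.parent v ≠ none) ∧
    ∀ v ∈ C, ∀ w ∈ C, F.Reaches v w → v = w

/-- The vertex set of the severed part `P_C(F)`: all vertices lying weakly below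
some cut edge. -/
noncomputable def cutSet (F : Forest) (C : Finset ℕ) : Finset ℕ :=
  F.verts.filter fun u => ∃ v ∈ C, F.Reaches u v

/-- `C ≤ C'`: along every leaf-to-root path, the cut edge of `C'` occurs at the
cut edge of `C` or closer to the root. -/
def CutLE (F : Forest) (C C' : Finset ℕ) : Prop :=
  ∀ v ∈ C, ∃ w ∈ C', F.Reaches v w

end Forest

namespace Forest

variable {F : Forest} {C C' D H T : Finset ℕ}

lemma mem_verts_of_reaches {u v : ℕ} (h : F.Reaches u v) (hu : u ∈ F.verts) : v ∈ F.verts := by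
  induction h with
  | refl => exact hu
  | tail _ hstep ih => exact F.parent_mem _ ih _ hstep

lemma reaches_data (F : Forest) : ∃ d : ℕ → ℕ, ∀ u v, F.Reaches u v → u ∈ F.verts →
    v ∈ F.verts ∧ d v ≤ d u ∧ (v ≠ u → d v < d u) := by
  obtain ⟨d, hd⟩ := F.wf
  refine ⟨d, fun u v h hu => ?_⟩
  induction h with
  | refl => exact ⟨hu, le_refl _, fun h => absurd rfl h⟩
  | tail _ hstep ih =>
    obtain ⟨hb, hle, _⟩ := ih
    have hlt := hd _ hb _ hstep
    exact ⟨F.parent_mem _ hb _ hstep, le_of_lt (lt_of_lt_of_le hlt hle),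
      fun _ => lt_of_lt_of_le hlt hle⟩

lemma reaches_antisymm {u v : ℕ} (hu : u ∈ F.verts)
    (h1 : F.Reaches u v) (h2 : F.Reaches v u) : u = v := by
  obtain ⟨d, hd⟩ := F.reaches_data
  by_contra hne
  have a1 := hd u v h1 hu
  have a2 := hd v u h2 a1.1
  exact absurd (a2.2.2 hne) (not_lt.mpr (le_of_lt (a1.2.2 (Ne.symm hne))))

lemma mem_cutSet {u : ℕ} : u ∈ F.cutSet C ↔ u ∈ F.verts ∧ ∃ v ∈ C, F.Reaches u v := by
  simp [cutSet]

lemma subset_cutSet (hC : F.AdmissibleCut C) : C ⊆ F.cutSet C := fun c hc =>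
  mem_cutSet.mpr ⟨(hC.1 c hc).1, c, hc, Relation.ReflTransGen.refl⟩

lemma cutSet_closed {v w : ℕ} (hv : v ∈ F.cutSet C) (hw : w ∈ F.verts)
    (h : F.parent w = some v) : w ∈ F.cutSet C := by
  obtain ⟨_, c, hc, hr⟩ := mem_cutSet.mp hv
  exact mem_cutSet.mpr ⟨hw, c, hc, Relation.ReflTransGen.head h hr⟩

lemma cutSet_reaches_closed {v w : ℕ} (hv : v ∈ F.cutSet C) (hw : w ∈ F.verts)
    (h : F.Reaches w v) : w ∈ F.cutSet C := by
  obtain ⟨_, c, hc, hr⟩ := mem_cutSet.mp hv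
  exact mem_cutSet.mpr ⟨hw, c, hc, h.trans hr⟩

lemma parent_not_mem_cutSet {w p : ℕ} (hw : w ∈ F.verts) (hwS : w ∉ F.cutSet C)
    (h : F.parent w = some p) : p ∉ F.cutSet C := fun hp => hwS (cutSet_closed hp hw h)

lemma quot_verts_eq (S : Finset ℕ) : (F.quot S).verts = F.verts \ S := rfl

lemma quot_parent_eq {w : ℕ} (hw : w ∈ F.verts) (hwS : w ∉ F.cutSet C) :
    (F.quot (F.cutSet C)).parent w = F.parent w := by
  show (F.parent w).bind _ = _
  cases h : F.parent w with
  | none => rfl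
  | some p =>
    have hp : p ∈ F.verts := F.parent_mem _ hw _ h
    have hpS : p ∉ F.cutSet C := parent_not_mem_cutSet hw hwS h
    simp [Finset.mem_sdiff, hw, hwS, hp, hpS]

lemma quot_parent_some {S : Finset ℕ} {w p : ℕ} (h : (F.quot S).parent w = some p) :
    F.parent w = some p := by
  change (F.parent w).bind _ = some p at h
  cases hq : F.parent w with
  | none => rw [hq] at h; simp at h
  | some q =>
    rw [hq] at h
    simp only [Option.bind_some] at h
    split at h
    · cases h; rfl
    · simp at h

lemma quot_reaches_of_reaches {S : Finset ℕ} {u v : ℕ} (h : (F.quot S).Reaches u v) :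
    F.Reaches u v :=
  Relation.ReflTransGen.mono (fun _ _ hab => quot_parent_some hab) u v h

lemma reaches_quot {u v : ℕ} (h : F.Reaches u v) :
    ∀ _ : u ∈ F.verts, ∀ _ : u ∉ F.cutSet C, (F.quot (F.cutSet C)).Reaches u v := by
  induction h using Relation.ReflTransGen.head_induction_on with
  | refl => exact fun _ _ => Relation.ReflTransGen.refl
  | @head a c hstep _ ih =>
    intro hu huS
    have hq : (F.quot (F.cutSet C)).parent a = some c := by
      rw [quot_parent_eq hu huS]; exact hstep
    have hc := (F.quot (F.cutSet C)).parent_mem _ (Finset.mem_sdiff.mpr ⟨hu, huS⟩) _ hq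
    have hc' := Finset.mem_sdiff.mp hc
    exact Relation.ReflTransGen.head hq (ih hc'.1 hc'.2)

lemma mem_of_mem_cutSet (hC : F.AdmissibleCut C) (hC' : F.AdmissibleCut C')
    (hle : F.CutLE C C') {w : ℕ} (hw : w ∈ C') (hwS : w ∈ F.cutSet C) : w ∈ C := by
  obtain ⟨hwV, c, hc, hr⟩ := mem_cutSet.mp hwS
  obtain ⟨w', hw', hr'⟩ := hle c hc
  have h1 : w = w' := hC'.2 w hw w' hw' (hr.trans hr')
  subst h1
  have h2 : w = c := reaches_antisymm hwV hr hr'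
  rw [h2]; exact hc

lemma phi_adm (hC' : F.AdmissibleCut C') (hle : F.CutLE C C') :
    (F.quot (F.cutSet C)).AdmissibleCut (C' \ F.cutSet C) := by
  constructor
  · intro v hv
    obtain ⟨hv1, hv2⟩ := Finset.mem_sdiff.mp hv
    obtain ⟨hvV, hvp⟩ := hC'.1 v hv1
    refine ⟨Finset.mem_sdiff.mpr ⟨hvV, hv2⟩, ?_⟩
    rw [quot_parent_eq hvV hv2]; exact hvp
  · intro v hv w hw hr
    exact hC'.2 v (Finset.mem_sdiff.mp hv).1 w (Finset.mem_sdiff.mp hw).1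
      (quot_reaches_of_reaches hr)

lemma quot_parent_ne_none {S : Finset ℕ} {v : ℕ} (h : (F.quot S).parent v ≠ none) :
    F.parent v ≠ none := by
  intro hn
  apply h
  show (F.parent v).bind _ = none
  rw [hn]; rfl

lemma psi_adm (hC : F.AdmissibleCut C) (hD : (F.quot (F.cutSet C)).AdmissibleCut D) :
    F.AdmissibleCut (D ∪ C.filter fun c => ¬ ∃ w ∈ D, F.Reaches c w) := by
  constructor
  · intro v hv
    rcases Finset.mem_union.mp hv with h | h
    · obtain ⟨hv1, hv2⟩ := hD.1 v h
      exact ⟨(Finset.mem_sdiff.mp hv1).1, quot_parent_ne_none hv2⟩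
    · exact hC.1 v (Finset.mem_filter.mp h).1
  · intro v hv w hw hr
    rcases Finset.mem_union.mp hv with h1 | h1 <;> rcases Finset.mem_union.mp hw with h2 | h2
    · -- both in D
      have hv' := Finset.mem_sdiff.mp (hD.1 v h1).1
      exact hD.2 v h1 w h2 (reaches_quot hr hv'.1 hv'.2)
    · -- v ∈ D, w ∈ C : impossible since then v ∈ cutSet
      obtain ⟨h2c, _⟩ := Finset.mem_filter.mp h2
      have hv' := Finset.mem_sdiff.mp (hD.1 v h1).1
      exact absurd (mem_cutSet.mpr ⟨hv'.1, w, h2c, hr⟩) hv'.2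
    · -- v ∈ C filter, w ∈ D : contradicts the filter
      obtain ⟨_, hfil⟩ := Finset.mem_filter.mp h1
      exact absurd ⟨w, h2, hr⟩ hfil
    · exact hC.2 v (Finset.mem_filter.mp h1).1 w (Finset.mem_filter.mp h2).1 hr

lemma psi_le : F.CutLE C (D ∪ C.filter fun c => ¬ ∃ w ∈ D, F.Reaches c w) := by
  intro c hc
  by_cases h : ∃ w ∈ D, F.Reaches c w
  · obtain ⟨w, hw, hr⟩ := h
    exact ⟨w, Finset.mem_union_left _ hw, hr⟩
  · exact ⟨c, Finset.mem_union_right _ (Finset.mem_filter.mpr ⟨hc, h⟩),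
      Relation.ReflTransGen.refl⟩

lemma psi_phi (hC : F.AdmissibleCut C) (hC' : F.AdmissibleCut C') (hle : F.CutLE C C') :
    (C' \ F.cutSet C) ∪
      C.filter (fun c => ¬ ∃ w ∈ C' \ F.cutSet C, F.Reaches c w) = C' := by
  ext x
  simp only [Finset.mem_union, Finset.mem_sdiff, Finset.mem_filter]
  constructor
  · rintro (⟨h1, _⟩ | ⟨hxC, hfil⟩)
    · exact h1
    · obtain ⟨w, hw, hr⟩ := hle x hxC
      by_cases hwS : w ∈ F.cutSet C
      · have hwC : w ∈ C := mem_of_mem_cutSet hC hC' hle hw hwS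
        have hxw := hC.2 x hxC w hwC hr
        rw [hxw]; exact hw
      · exact absurd ⟨w, ⟨hw, hwS⟩, hr⟩ hfil
  · intro hx
    by_cases hxS : x ∈ F.cutSet C
    · right
      refine ⟨mem_of_mem_cutSet hC hC' hle hx hxS, ?_⟩
      rintro ⟨w, ⟨hwC', hwS⟩, hr⟩
      have hxw := hC'.2 x hx w hwC' hr
      rw [hxw] at hxS
      exact hwS hxS
    · exact Or.inl ⟨hx, hxS⟩

lemma phi_psi (hC : F.AdmissibleCut C) (hD : (F.quot (F.cutSet C)).AdmissibleCut D) :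
    (D ∪ C.filter fun c => ¬ ∃ w ∈ D, F.Reaches c w) \ F.cutSet C = D := by
  ext x
  simp only [Finset.mem_sdiff, Finset.mem_union, Finset.mem_filter]
  constructor
  · rintro ⟨h1 | h1, h2⟩
    · exact h1
    · exact absurd (subset_cutSet hC h1.1) h2
  · intro hx
    exact ⟨Or.inl hx, (Finset.mem_sdiff.mp (hD.1 x hx).1).2⟩

lemma sub_quot (hH : F.IsSub H) (_ : F.cutSet C ⊆ H) :
    (F.quot (F.cutSet C)).IsSub (H \ F.cutSet C) := by
  constructor
  · intro x hx
    obtain ⟨h1, h2⟩ := Finset.mem_sdiff.mp hx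
    exact Finset.mem_sdiff.mpr ⟨hH.1 h1, h2⟩
  · intro v hv w hw hp
    obtain ⟨hv1, _⟩ := Finset.mem_sdiff.mp hv
    obtain ⟨hw1, hw2⟩ := Finset.mem_sdiff.mp hw
    exact Finset.mem_sdiff.mpr ⟨hH.2 v hv1 w hw1 (quot_parent_some hp), hw2⟩

lemma sub_union (hT : (F.quot (F.cutSet C)).IsSub T) : F.IsSub (T ∪ F.cutSet C) := by
  constructor
  · intro x hx
    rcases Finset.mem_union.mp hx with h | h
    · exact (Finset.mem_sdiff.mp (hT.1 h)).1
    · exact mem_cutSet.mp h |>.1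
  · intro v hv w hw hp
    rcases Finset.mem_union.mp hv with h | h
    · by_cases hwS : w ∈ F.cutSet C
      · exact Finset.mem_union_right _ hwS
      · have hq : (F.quot (F.cutSet C)).parent w = some v := by
          rw [quot_parent_eq hw hwS]; exact hp
        exact Finset.mem_union_left _
          (hT.2 v h w (Finset.mem_sdiff.mpr ⟨hw, hwS⟩) hq)
    · exact Finset.mem_union_right _ (cutSet_closed h hw hp)

end Forest

/-- For a labeled rooted forest `F` with admissible cut `C`, admissible
cuts `C'` of `F` with `C ≤ C'` correspond bijectively to admissible cuts of the
quotient `R_C(F)`; consequently subforests of `R_C(F)` correspond bijectively to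
subforests `H` of `F` with `P_C(F) ⊆ H ⊆ F`. -/
theorem cuts_of_quotient_bijection (F : Forest) (C : Finset ℕ)
    (hC : F.AdmissibleCut C) :
    Nonempty ({C' : Finset ℕ // F.AdmissibleCut C' ∧ F.CutLE C C'} ≃
      {D : Finset ℕ // (F.quot (F.cutSet C)).AdmissibleCut D}) ∧
    Nonempty ({H : Finset ℕ // F.IsSub H ∧ F.cutSet C ⊆ H} ≃
      {T : Finset ℕ // (F.quot (F.cutSet C)).IsSub T}) := by
  constructor
  · exact ⟨{
      toFun := fun p => ⟨p.1 \ F.cutSet C, Forest.phi_adm p.2.1 p.2.2⟩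
      invFun := fun q => ⟨q.1 ∪ C.filter (fun c => ¬ ∃ w ∈ q.1, F.Reaches c w),
        Forest.psi_adm hC q.2, Forest.psi_le⟩
      left_inv := fun p => Subtype.ext (Forest.psi_phi hC p.2.1 p.2.2)
      right_inv := fun q => Subtype.ext (Forest.phi_psi hC q.2) }⟩
  · refine ⟨{
      toFun := fun p => ⟨p.1 \ F.cutSet C, Forest.sub_quot p.2.1 p.2.2⟩
      invFun := fun q => ⟨q.1 ∪ F.cutSet C, Forest.sub_union q.2, Finset.subset_union_right⟩
      left_inv := fun p => Subtype.ext (Finset.sdiff_union_of_subset p.2.2)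
      right_inv := fun q => Subtype.ext ?_ }⟩
    have hdisj : Disjoint q.1 (F.cutSet C) := by
      refine Finset.disjoint_left.mpr fun a ha haS => ?_
      exact (Finset.mem_sdiff.mp (q.2.1 ha)).2 haS
    simp [Finset.union_sdiff_distrib, Finset.sdiff_eq_self_of_disjoint hdisj]
end

section
/- Every monomorphism in the category LRF of labeled rooted forests is of the form (C_null, C₁, f) : P_{C₁}(F₁) → F₁ where f is an automorphism of P_{C₁}(F₁); in particular, for a fixed image subforest P_{C₁}(F₁), the monomorphisms with that image form a torsor over Aut(P_{C₁}(F₁)) and number exactly |Aut(P_{C₁}(F₁))|. -/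
attribute [local instance] Classical.propDecidable

namespace Forest

/-- A (raw) morphism datum in the category `LRF`: a triple `(C₁, C₂, f)`. -/
structure Mor where
  cut1 : Finset ℕ
  cut2 : Finset ℕ
  map : ℕ → ℕ

/-- `(C₁, C₂, f)` is a morphism `F → G` in `LRF`: `C₁` is an admissible cut of `F`
(recorded by the severed vertex set), `C₂` one of `G`, and `f` an isomorphism
`R_{C₁}(F) ≅ P_{C₂}(G)`. -/
def IsMor (F G : Forest) (m : Mor) : Prop :=
  F.IsSub m.cut1 ∧ G.IsSub m.cut2 ∧
    IsoMap (F.quot m.cut1) (G.restrict m.cut2) m.map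

/-- Composition of morphisms in `LRF` (`m : F → F₂` followed by `n : F₂ → F₃`):
the cut of `n` is pulled back through `m` to a cut `E₁ ≥ C₁` of `F`, and the new
image is the image of `R_{E₁}(F)` under the composite map. -/
noncomputable def Mor.comp (F : Forest) (m n : Mor) : Mor :=
  ⟨m.cut1 ∪ ((F.quot m.cut1).verts.filter fun v => m.map v ∈ n.cut1),
   ((F.quot (m.cut1 ∪ ((F.quot m.cut1).verts.filter fun v => m.map v ∈ n.cut1))).verts).image
     (n.map ∘ m.map),
   n.map ∘ m.map⟩

/-- The identity morphism `(C_null, C_full, id)` of `F`. -/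
def idMor (F : Forest) : Mor := ⟨∅, F.verts, id⟩

/-- Equality of morphisms out of `F` (the map only matters on `R_{C₁}(F)`). -/
def MorEq (F : Forest) (m n : Mor) : Prop :=
  m.cut1 = n.cut1 ∧ m.cut2 = n.cut2 ∧
    ∀ v ∈ (F.quot m.cut1).verts, m.map v = n.map v

/-- The zero morphisms `F → G`: morphisms with empty image (factoring through `∅`). -/
def IsZeroMor (F G : Forest) (m : Mor) : Prop := IsMor F G m ∧ m.cut2 = ∅

end Forest

namespace Forest

/-- `m` is a monomorphism `F₁ → F₂` in `LRF`: a left-cancellable morphism. -/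
def IsMono (F1 F2 : Forest) (m : Mor) : Prop :=
  IsMor F1 F2 m ∧ ∀ (A : Forest) (u v : Mor), IsMor A F1 u → IsMor A F1 v →
    MorEq A (Mor.comp A u m) (Mor.comp A v m) → MorEq A u v

/-- Normalized isomorphisms `A ≅ B` (acting as the identity off `A`). -/
def NIso (A B : Forest) : Type :=
  {f : ℕ → ℕ // IsoMap A B f ∧ ∀ v, v ∉ A.verts → f v = v}

end Forest


namespace Forest

lemma quot_self_verts (A : Forest) : (A.quot A.verts).verts = ∅ :=
  Finset.sdiff_self _

lemma quot_empty_verts (A : Forest) : (A.quot ∅).verts = A.verts :=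
  Finset.sdiff_empty

lemma quot_empty_parent (A : Forest) {v : ℕ} (hv : v ∈ A.verts) :
    (A.quot ∅).parent v = A.parent v := by
  show (A.parent v).bind _ = _
  cases h : A.parent v with
  | none => simp
  | some p =>
    have hp : p ∈ A.verts := A.parent_mem v hv p h
    simp [hv, hp]

lemma isoMap_quot_empty {A B : Forest} {φ : ℕ → ℕ} :
    IsoMap (A.quot ∅) B φ ↔ IsoMap A B φ := by
  have hv : (A.quot ∅).verts = A.verts := quot_empty_verts A
  constructor
  · rintro ⟨hb, hp⟩
    refine ⟨by rwa [hv] at hb, fun v hv' => ?_⟩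
    rw [← quot_empty_parent A hv']
    exact hp v (by rwa [hv])
  · rintro ⟨hb, hp⟩
    refine ⟨by rwa [hv], fun v hv' => ?_⟩
    have hv2 : v ∈ A.verts := by rwa [hv] at hv'
    rw [quot_empty_parent A hv2]
    exact hp v hv2

lemma isoMap_congr {A B : Forest} {φ φ' : ℕ → ℕ} (h : IsoMap A B φ)
    (he : ∀ v ∈ A.verts, φ v = φ' v) : IsoMap A B φ' := by
  refine ⟨h.1.congr (fun v hv => he v hv), fun v hv => ?_⟩
  rw [← he v hv, ← h.2 v hv]
  cases hp : A.parent v with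
  | none => simp
  | some p => simp [he p (A.parent_mem v hv p hp)]

lemma isoMap_id (A : Forest) : IsoMap A A id := by
  refine ⟨Set.bijOn_id _, fun v hv => ?_⟩
  simp

lemma isoMap_comp {A B C : Forest} {φ χ : ℕ → ℕ} (h1 : IsoMap A B φ)
    (h2 : IsoMap B C χ) : IsoMap A C (fun v => χ (φ v)) := by
  refine ⟨h2.1.comp h1.1, fun v hv => ?_⟩
  have e1 := h1.2 v hv
  have e2 := h2.2 (φ v) (h1.1.mapsTo hv)
  calc (A.parent v).map (fun v => χ (φ v)) = ((A.parent v).map φ).map χ := by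
        cases A.parent v <;> simp
    _ = (B.parent (φ v)).map χ := by rw [e1]
    _ = C.parent (χ (φ v)) := e2

lemma isoMap_inv {A B : Forest} {φ : ℕ → ℕ} (h : IsoMap A B φ) :
    ∃ ψ : ℕ → ℕ, IsoMap B A ψ ∧ (∀ a ∈ A.verts, ψ (φ a) = a) ∧
      (∀ w ∈ (B.verts : Finset ℕ), φ (ψ w) = w) := by
  classical
  set ψ : ℕ → ℕ := Function.invFunOn φ (A.verts : Set ℕ) with hψ
  have hinv : Set.InvOn ψ φ (A.verts : Set ℕ) (B.verts : Set ℕ) :=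
    h.1.invOn_invFunOn
  have hbij : Set.BijOn ψ (B.verts : Set ℕ) (A.verts : Set ℕ) :=
    Set.BijOn.symm hinv.symm h.1
  have hleft : ∀ a ∈ A.verts, ψ (φ a) = a := fun a ha => hinv.1 ha
  have hright : ∀ w ∈ B.verts, φ (ψ w) = w := fun w hw => hinv.2 hw
  refine ⟨ψ, ⟨hbij, fun w hw => ?_⟩, hleft, hright⟩
  have haA : ψ w ∈ A.verts := hbij.mapsTo hw
  have e := h.2 (ψ w) haA
  rw [hright w hw] at e
  cases hpa : A.parent (ψ w) with
  | none => rw [← e, hpa]; simp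
  | some p =>
    rw [hpa] at e
    simp only [Option.map_some] at e
    rw [← e]
    simp only [Option.map_some]
    rw [hleft p (A.parent_mem _ haA p hpa)]

lemma cut2_eq_image {A F : Forest} {u : Mor} (hu : IsMor A F u) :
    (u.cut2 : Set ℕ) = u.map '' ((A.quot u.cut1).verts : Set ℕ) := by
  have := hu.2.2.1.image_eq
  rw [this]
  show (u.cut2 : Set ℕ) = ((u.cut2 ∩ F.verts : Finset ℕ) : Set ℕ)
  rw [Finset.inter_eq_left.mpr hu.2.1.1]

end Forest

open Forest in
/-- Every monomorphism in `LRF` is of the form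
`(C_null, C₁, f) : P_{C₁}(F₁) → F₁` with `f` an automorphism of `P_{C₁}(F₁)`
(i.e. a morphism is mono iff its first cut is empty); and for a fixed image
subforest `P_{C₁}(F₁)`, the monomorphisms with that image form a torsor over
`Aut(P_{C₁}(F₁))`, so there are exactly `|Aut(P_{C₁}(F₁))|` of them. -/
theorem LRF_monomorphisms :
    (∀ (F1 F2 : Forest) (m : Mor), IsMor F1 F2 m →
      (IsMono F1 F2 m ↔ m.cut1 = ∅)) ∧
    (∀ (A F : Forest) (S : Finset ℕ), F.IsSub S → Iso A (F.restrict S) →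
      Nonempty
        ({u : Mor // IsMor A F u ∧ u.cut1 = ∅ ∧ u.cut2 = S ∧
            ∀ v, v ∉ A.verts → u.map v = v} ≃
          NIso (F.restrict S) (F.restrict S)) ∧
      Nat.card {u : Mor // IsMor A F u ∧ u.cut1 = ∅ ∧ u.cut2 = S ∧
            ∀ v, v ∉ A.verts → u.map v = v} =
        Nat.card (NIso (F.restrict S) (F.restrict S))) := by
  constructor
  · -- Part 1: mono ↔ cut1 = ∅
    intro F1 F2 m hm
    constructor
    · -- mono → cut1 = ∅
      rintro ⟨-, hcan⟩
      set A := F1.restrict m.cut1 with hA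
      have hAv : A.verts = m.cut1 := by
        show m.cut1 ∩ F1.verts = m.cut1
        exact Finset.inter_eq_left.mpr hm.1.1
      have hu : IsMor A F1 ⟨∅, m.cut1, id⟩ := by
        refine ⟨⟨Finset.empty_subset _, by simp⟩, hm.1, ?_⟩
        exact isoMap_quot_empty.mpr (isoMap_id A)
      have hv : IsMor A F1 ⟨A.verts, ∅, id⟩ := by
        refine ⟨⟨Finset.Subset.refl _, fun _ _ w hw _ => hw⟩,
          ⟨Finset.empty_subset _, by simp⟩, ?_⟩
        constructor
        · have h1 : (A.quot A.verts).verts = ∅ := Finset.sdiff_self _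
          have h2 : (F1.restrict ∅).verts = ∅ := Finset.empty_inter _
          rw [show ((A.quot A.verts).verts : Set ℕ) = ∅ by rw [h1]; simp,
              show ((F1.restrict ∅).verts : Set ℕ) = ∅ by rw [h2]; simp]
          simp [Set.bijOn_empty_iff_left]
        · intro w hw
          have h1 : (A.quot A.verts).verts = ∅ := Finset.sdiff_self _
          rw [h1] at hw
          simp at hw
      have hcut1u : (Mor.comp A ⟨∅, m.cut1, id⟩ m).cut1 = A.verts := by
        show ∅ ∪ ((A.quot ∅).verts.filter fun w => id w ∈ m.cut1) = A.verts
        rw [Finset.empty_union, quot_empty_verts]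
        apply Finset.filter_true_of_mem
        intro w hw
        rw [hAv] at hw
        exact hw
      have hcut1v : (Mor.comp A ⟨A.verts, ∅, id⟩ m).cut1 = A.verts := by
        show A.verts ∪ ((A.quot A.verts).verts.filter fun w => id w ∈ m.cut1) = A.verts
        rw [quot_self_verts]
        simp
      have hcut2 : ∀ (w : Mor), (Mor.comp A w m).cut2 =
          ((A.quot (Mor.comp A w m).cut1).verts).image (m.map ∘ w.map) := fun w => rfl
      have heq : MorEq A (Mor.comp A ⟨∅, m.cut1, id⟩ m) (Mor.comp A ⟨A.verts, ∅, id⟩ m) := by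
        refine ⟨hcut1u.trans hcut1v.symm, ?_, ?_⟩
        · rw [hcut2, hcut2, hcut1u, hcut1v, quot_self_verts]
        · intro w hw
          rw [hcut1u, quot_self_verts] at hw
          simp at hw
      have hres := hcan A _ _ hu hv heq
      have : (∅ : Finset ℕ) = A.verts := hres.1
      rw [← hAv, ← this]
    · -- cut1 = ∅ → mono
      intro h0
      refine ⟨hm, fun A u v hu hv heq => ?_⟩
      have hkey : ∀ (w : Mor), (Mor.comp A w m).cut1 = w.cut1 := by
        intro w
        show w.cut1 ∪ ((A.quot w.cut1).verts.filter fun x => w.map x ∈ m.cut1) = w.cut1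
        rw [h0]
        simp
      have hc1 : u.cut1 = v.cut1 := by rw [← hkey u, ← hkey v]; exact heq.1
      have hinj := hm.2.2.1.injOn
      have hFv : ((F1.quot m.cut1).verts : Set ℕ) = (F1.verts : Set ℕ) := by
        rw [h0, quot_empty_verts]
      rw [hFv] at hinj
      have hmapagree : ∀ w ∈ (A.quot u.cut1).verts, u.map w = v.map w := by
        intro w hw
        have h1 : u.map w ∈ (F1.restrict u.cut2).verts :=
          hu.2.2.1.mapsTo (Finset.mem_coe.mpr hw)
        have h2 : v.map w ∈ (F1.restrict v.cut2).verts :=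
          hv.2.2.1.mapsTo (Finset.mem_coe.mpr (by rwa [hc1] at hw))
        have h1' : u.map w ∈ F1.verts := (Finset.mem_inter.mp h1).2
        have h2' : v.map w ∈ F1.verts := (Finset.mem_inter.mp h2).2
        apply hinj (Finset.mem_coe.mpr h1') (Finset.mem_coe.mpr h2')
        have hw' : w ∈ (A.quot (Mor.comp A u m).cut1).verts := by
          rw [hkey u]; exact hw
        exact heq.2.2 w hw'
      have hc2 : u.cut2 = v.cut2 := by
        apply Finset.coe_injective
        rw [cut2_eq_image hu, cut2_eq_image hv, ← hc1]
        exact Set.image_congr (fun w hw => hmapagree w (Finset.mem_coe.mp hw))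
      exact ⟨hc1, hc2, hmapagree⟩
  · -- Part 2: torsor / counting
    intro A F S hS hIso
    obtain ⟨φ0, hφ0⟩ := hIso
    set P := F.restrict S with hP
    set u0map : ℕ → ℕ := fun v => if v ∈ A.verts then φ0 v else v with hu0
    have h0 : IsoMap A P u0map :=
      isoMap_congr hφ0 (fun v hv => by simp [hu0, hv])
    obtain ⟨ψ, hψ, hleft, hright⟩ := isoMap_inv h0
    have hmemA : ∀ u : Mor, IsMor A F u → u.cut1 = ∅ → u.cut2 = S →
        IsoMap A P u.map := by
      intro u hu h1 h2
      have h3 := hu.2.2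
      rw [h1, h2] at h3
      exact isoMap_quot_empty.mp h3
    have key : ∀ u : Mor, IsMor A F u → u.cut1 = ∅ → u.cut2 = S →
        IsoMap P P (fun w => if w ∈ P.verts then u.map (ψ w) else w) := by
      intro u hu h1 h2
      have hiso : IsoMap A P u.map := hmemA u hu h1 h2
      exact isoMap_congr (isoMap_comp hψ hiso) (fun w hw => (if_pos hw).symm)
    have key2 : ∀ g : ℕ → ℕ, IsoMap P P g →
        IsMor A F ⟨∅, S, fun v => if v ∈ A.verts then g (u0map v) else v⟩ := by
      intro g hg
      refine ⟨⟨Finset.empty_subset _, by simp⟩, hS, ?_⟩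
      apply isoMap_quot_empty.mpr
      exact isoMap_congr (isoMap_comp h0 hg) (fun v hv => (if_pos hv).symm)
    have E : {u : Mor // IsMor A F u ∧ u.cut1 = ∅ ∧ u.cut2 = S ∧
        ∀ v, v ∉ A.verts → u.map v = v} ≃ NIso P P :=
      { toFun := fun u => ⟨fun w => if w ∈ P.verts then u.1.map (ψ w) else w,
          key u.1 u.2.1 u.2.2.1 u.2.2.2.1, fun w hw => if_neg hw⟩
        invFun := fun g => ⟨⟨∅, S, fun v => if v ∈ A.verts then g.1 (u0map v) else v⟩,
          key2 g.1 g.2.1, rfl, rfl, fun v hv => if_neg hv⟩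
        left_inv := by
          rintro ⟨⟨c1, c2, mp⟩, hu, h1, h2, hn⟩
          apply Subtype.ext
          simp only at h1 h2 hn ⊢
          subst h1
          subst h2
          simp only [Mor.mk.injEq, true_and]
          funext v
          by_cases hv : v ∈ A.verts
          · rw [if_pos hv]
            have hPv : u0map v ∈ P.verts := h0.1.mapsTo (Finset.mem_coe.mpr hv)
            rw [if_pos (Finset.mem_coe.mp hPv), hleft v hv]
          · rw [if_neg hv, hn v hv]
        right_inv := by
          rintro ⟨gf, hg, hgn⟩
          apply Subtype.ext
          funext w
          simp only
          by_cases hw : w ∈ P.verts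
          · rw [if_pos hw]
            have hAw : ψ w ∈ A.verts := hψ.1.mapsTo (Finset.mem_coe.mpr hw)
            rw [if_pos hAw, hright w hw]
          · rw [if_neg hw, hgn w hw] }
    exact ⟨⟨E⟩, Nat.card_congr E⟩
end
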